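/- Let G be a group, A ≤ Z(G) a central subgroup, and U ≤ A a subgroup of finite p-power index in A. If U is p-separable in G, then there exists a normal subgroup R ⊴ G of finite p-power index in G with R ∩ A = U. -/

import Mathlib

/-- A subset `M` of a group `G` is `p`-separable if every `a ∈ G` with `a ∉ M` can be
separated from `M` by a homomorphism of `G` onto a finite `p`-group. -/
def PSep (p : ℕ) {G : Type} [Group G] (M : Set G) : Prop :=
  ∀ a : G, a ∉ M →
    ∃ (X : Type) (_ : Group X), Finite X ∧ IsPGroup p X ∧
      ∃ φ : G →* X, Function.Surjective φ ∧ φ a ∉ φ '' M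

/-- If `A` is central in `G`, `U ≤ A` has finite `p`-power index in `A` and `U` is
`p`-separable in `G`, then there is a normal subgroup `R ⊴ G` of finite `p`-power index
with `R ∩ A = U`. -/
theorem exists_normal_pPow_index_inter_eq (p : ℕ) (hp : p.Prime)
    (G : Type) [Group G] (A U : Subgroup G)
    (hA : A ≤ Subgroup.center G) (hUA : U ≤ A)
    (hUidx : ∃ n : ℕ, U.relIndex A = p ^ n)
    (hUsep : PSep p (U : Set G)) :
    ∃ R : Subgroup G, R.Normal ∧ (∃ n : ℕ, R.index = p ^ n) ∧ R ⊓ A = U := by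
  classical
  haveI : Fact p.Prime := ⟨hp⟩
  -- U is normal in G (it is central)
  haveI hUnormal : U.Normal := by
    constructor
    intro u hu g
    have : u ∈ Subgroup.center G := hA (hUA hu)
    rw [Subgroup.mem_center_iff] at this
    rw [this g, mul_assoc, mul_inv_cancel, mul_one]
    exact hu
  -- key: separate each a ∉ U by a normal subgroup of p-power index containing U
  have key : ∀ a : G, a ∉ U → ∃ N : Subgroup G, N.Normal ∧ (∃ n : ℕ, N.index = p ^ n)
      ∧ U ≤ N ∧ a ∉ N := by
    intro a ha
    obtain ⟨X, _, hfinX, hpX, φ, hsurj, hsep⟩ := hUsep a ha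
    refine ⟨U ⊔ φ.ker, inferInstance, ?_, le_sup_left, ?_⟩
    · obtain ⟨m, hm⟩ := (IsPGroup.iff_card (p := p)).mp hpX
      have hdvd : (U ⊔ φ.ker).index ∣ φ.ker.index :=
        Subgroup.index_dvd_of_le le_sup_right
      have hker : φ.ker.index = p ^ m := by
        rw [Subgroup.index_ker, MonoidHom.range_eq_top.mpr hsurj, ← hm]
        exact Nat.card_congr Subgroup.topEquiv.toEquiv
      rw [hker] at hdvd
      obtain ⟨k, _, hk⟩ := (Nat.dvd_prime_pow hp).mp hdvd
      exact ⟨k, hk⟩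
    · rw [← Subgroup.comap_map_eq, Subgroup.mem_comap]
      intro h
      exact hsep (by simpa [Subgroup.mem_map] using h)
  choose N hNnorm hNidx hNU hNa using key
  -- the quotient A / U is finite
  obtain ⟨n₀, hn₀⟩ := hUidx
  have hQfin : Finite (A ⧸ U.subgroupOf A) := by
    apply Nat.finite_of_card_ne_zero
    have : (U.subgroupOf A).index = p ^ n₀ := hn₀
    rw [Subgroup.index] at this
    rw [this]
    exact pow_ne_zero _ hp.ne_zero
  haveI := hQfin
  haveI := Fintype.ofFinite (A ⧸ U.subgroupOf A)
  -- family of separating subgroups indexed by cosets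
  set F : (A ⧸ U.subgroupOf A) → Subgroup G := fun c =>
    if h : ((c.out : A) : G) ∈ U then ⊤ else N _ h with hF
  have hFnorm : ∀ c, (F c).Normal := by
    intro c
    rw [hF]
    dsimp only
    split
    · infer_instance
    · exact hNnorm _ _
  have hFU : ∀ c, U ≤ F c := by
    intro c
    rw [hF]; dsimp only; split
    · exact le_top
    · exact hNU _ _
  have hFidx : ∀ c, ∃ n : ℕ, (F c).index = p ^ n := by
    intro c
    rw [hF]; dsimp only; split
    · exact ⟨0, by simp [Subgroup.index_top]⟩
    · exact hNidx _ _
  choose nF hnF using hFidx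
  set R : Subgroup G := ⨅ c, F c with hR
  haveI hRnorm : R.Normal := by
    constructor
    intro x hx g
    rw [hR, Subgroup.mem_iInf] at hx ⊢
    intro c
    exact (hFnorm c).conj_mem x (hx c) g
  refine ⟨R, hRnorm, ?_, ?_⟩
  · -- p-power index
    haveI hRfin : R.FiniteIndex := by
      apply Subgroup.finiteIndex_iInf
      intro c
      exact ⟨by rw [hnF c]; exact pow_ne_zero _ hp.ne_zero⟩
    have hQRfin : Finite (G ⧸ R) := by
      apply Nat.finite_of_card_ne_zero
      rw [← Subgroup.index]
      exact hRfin.index_ne_zero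
    haveI := hQRfin
    have hpQ : IsPGroup p (G ⧸ R) := by
      intro g
      obtain ⟨g, rfl⟩ := QuotientGroup.mk_surjective g
      refine ⟨Finset.univ.sup nF, ?_⟩
      have : g ^ (p ^ Finset.univ.sup nF) ∈ R := by
        rw [hR, Subgroup.mem_iInf]
        intro c
        haveI : (F c).FiniteIndex :=
          ⟨by rw [hnF c]; exact pow_ne_zero _ hp.ne_zero⟩
        haveI := hFnorm c
        have h1 : g ^ ((F c).index) ∈ F c := Subgroup.pow_index_mem (F c) g
        have h2 : (F c).index ∣ p ^ Finset.univ.sup nF := by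
          rw [hnF c]
          exact pow_dvd_pow p (Finset.le_sup (Finset.mem_univ c))
        obtain ⟨d, hd⟩ := h2
        rw [hd, pow_mul]
        exact Subgroup.pow_mem _ h1 d
      rw [← QuotientGroup.mk_pow]
      rwa [QuotientGroup.eq_one_iff]
    obtain ⟨k, hk⟩ := (IsPGroup.iff_card (p := p)).mp hpQ
    exact ⟨k, by rw [Subgroup.index, hk]⟩
  · -- R ⊓ A = U
    apply le_antisymm
    · rintro x ⟨hxR, hxA⟩
      by_contra hxU
      set c : A ⧸ U.subgroupOf A := QuotientGroup.mk ⟨x, hxA⟩ with hc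
      have hout : QuotientGroup.mk (c.out) = c := Quotient.out_eq c
      rw [hc] at hout
      have hrel : (c.out)⁻¹ * ⟨x, hxA⟩ ∈ U.subgroupOf A := (QuotientGroup.eq).mp hout
      have hrelG : ((c.out : A) : G)⁻¹ * x ∈ U := hrel
      have haU : ((c.out : A) : G) ∉ U := by
        intro h
        apply hxU
        have := U.mul_mem h hrelG
        rwa [← mul_assoc, mul_inv_cancel, one_mul] at this
      have hFc : F c = N _ haU := by rw [hF]; dsimp only; rw [dif_neg haU]
      have haR : ((c.out : A) : G) ∈ F c := by
        have hx' : x ∈ F c := (Subgroup.mem_iInf.mp hxR) c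
        have hu : x⁻¹ * ((c.out : A) : G) ∈ F c := by
          apply hFU c
          have := U.inv_mem hrelG
          rwa [mul_inv_rev, inv_inv] at this
        have := (F c).mul_mem hx' hu
        rwa [← mul_assoc, mul_inv_cancel, one_mul] at this
      rw [hFc] at haR
      exact hNa _ haU haR
    · intro u hu
      exact ⟨Subgroup.mem_iInf.mpr fun c => hFU c hu, hUA hu⟩
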